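/- For each u ≥ a the infinite product ∏_{k=0}^∞ (F^k(u)/a) converges to a positive real number, so F̃(u) is well defined; F̃(a) = a; F̃ is strictly increasing and continuous on [a,∞) with F̃(u) → ∞ as u → ∞; and F̃ admits the expression F̃(u) = exp(V(u)), where V(u) = log a + ∫_a^u ( ∑_{k=0}^∞ 1/(∏_{j=0}^k F^j(t)) ) dt. -/

import Mathlib

open Real MeasureTheory Filter Topology Set

/-- `F(u) = a - log a + log u`. -/
noncomputable def Fa (a : ℝ) : ℝ → ℝ := fun u => a - Real.log a + Real.log u

/-- `F̃(u) = a · ∏_{k=0}^∞ (F^k(u)/a)`. -/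
noncomputable def Ftilde (a : ℝ) (u : ℝ) : ℝ := a * ∏' k : ℕ, ((Fa a)^[k] u / a)

/-- `φ(u) = a + ∫_a^u dt / F̃(t)`. -/
noncomputable def phiFun (a : ℝ) (u : ℝ) : ℝ := a + ∫ t in a..u, 1 / Ftilde a t

section Aux
variable {a : ℝ} (ha : 1 < a)
include ha

lemma ha0 : (0:ℝ) < a := lt_trans zero_lt_one ha

lemma Fa_ge {u : ℝ} (hu : a ≤ u) : a ≤ Fa a u := by
  have h := Real.log_le_log (ha0 ha) hu
  simp only [Fa]; linarith

lemma Fa_iter_ge (k : ℕ) {u : ℝ} (hu : a ≤ u) : a ≤ (Fa a)^[k] u := by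
  induction k with
  | zero => simpa using hu
  | succ n ih => rw [Function.iterate_succ_apply']; exact Fa_ge ha ih

lemma Fa_iter_pos (k : ℕ) {u : ℝ} (hu : a ≤ u) : 0 < (Fa a)^[k] u :=
  lt_of_lt_of_le (ha0 ha) (Fa_iter_ge ha k hu)

lemma Fa_sub_le {u : ℝ} (hu : a ≤ u) : Fa a u - a ≤ (u - a) / a := by
  have hu0 : 0 < u := lt_of_lt_of_le (ha0 ha) hu
  have h1 : Real.log (u / a) ≤ u / a - 1 :=
    Real.log_le_sub_one_of_pos (by positivity)
  have h2 : Real.log (u / a) = Real.log u - Real.log a :=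
    Real.log_div hu0.ne' (ha0 ha).ne'
  have h3 : u / a - 1 = (u - a) / a := by field_simp
  simp only [Fa]; linarith [h1, h2.symm ▸ h1]

lemma Fa_iter_sub_le (k : ℕ) {u : ℝ} (hu : a ≤ u) :
    (Fa a)^[k] u - a ≤ (u - a) / a ^ k := by
  induction k with
  | zero => simp
  | succ n ih =>
    rw [Function.iterate_succ_apply']
    have h1 := Fa_sub_le ha (Fa_iter_ge ha n hu)
    have h3 : ((u - a) / a ^ n) / a = (u - a) / a ^ (n + 1) := by
      rw [div_div, pow_succ]
    calc Fa a ((Fa a)^[n] u) - a ≤ ((Fa a)^[n] u - a) / a := h1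
      _ ≤ ((u - a) / a ^ n) / a := by gcongr
      _ = (u - a) / a ^ (n + 1) := h3

lemma Fa_iter_mono (k : ℕ) {u v : ℝ} (hu : a ≤ u) (huv : u ≤ v) :
    (Fa a)^[k] u ≤ (Fa a)^[k] v := by
  induction k with
  | zero => simpa using huv
  | succ n ih =>
    rw [Function.iterate_succ_apply', Function.iterate_succ_apply']
    have := Real.log_le_log (Fa_iter_pos ha n hu) ih
    simp only [Fa]; linarith

lemma summable_Sterm {u : ℝ} (hu : a ≤ u) :
    Summable (fun k : ℕ => (Fa a)^[k + 1] u - a) := by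
  refine Summable.of_nonneg_of_le
    (fun k => sub_nonneg.2 (Fa_iter_ge ha (k + 1) hu))
    (fun k => ?_)
    ((summable_geometric_of_lt_one (by positivity)
      (inv_lt_one_of_one_lt₀ ha)).mul_left ((u - a) * a⁻¹))
  have h := Fa_iter_sub_le ha (k + 1) hu
  have heq : (u - a) / a ^ (k + 1) = ((u - a) * a⁻¹) * a⁻¹ ^ k := by
    rw [div_eq_mul_inv, ← inv_pow, pow_succ]; ring
  linarith [heq ▸ h]

/-- `S a u = ∑_{k≥1} (F^k(u) - a)`. -/
noncomputable def Sa (a u : ℝ) : ℝ := ∑' k : ℕ, ((Fa a)^[k + 1] u - a)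

lemma term_eq {u : ℝ} (hu : a ≤ u) (k : ℕ) :
    (Fa a)^[k] u / a = Real.exp ((Fa a)^[k + 1] u - a) := by
  have hpos : 0 < (Fa a)^[k] u := Fa_iter_pos ha k hu
  have h1 : (Fa a)^[k + 1] u - a = Real.log ((Fa a)^[k] u / a) := by
    rw [Function.iterate_succ_apply', Real.log_div hpos.ne' (ha0 ha).ne']
    simp only [Fa]; ring
  rw [h1, Real.exp_log (by positivity)]

lemma hasProd_Ftilde {u : ℝ} (hu : a ≤ u) :
    HasProd (fun k : ℕ => (Fa a)^[k] u / a) (Real.exp (Sa a u)) := by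
  have h := (summable_Sterm ha hu).hasSum.rexp
  convert h using 1
  funext k
  exact term_eq ha hu k
  rfl

lemma Ftilde_eq {u : ℝ} (hu : a ≤ u) : Ftilde a u = a * Real.exp (Sa a u) := by
  rw [Ftilde, (hasProd_Ftilde ha hu).tprod_eq]

omit ha in
lemma Fa_iter_fixed (k : ℕ) : (Fa a)^[k] a = a := by
  induction k with
  | zero => simp
  | succ n ih => rw [Function.iterate_succ_apply', ih]; simp only [Fa]; ring

omit ha in
lemma Sa_self : Sa a a = 0 := by
  have : (fun k : ℕ => (Fa a)^[k + 1] a - a) = fun _ => 0 := by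
    funext k; rw [Fa_iter_fixed]; ring
  rw [Sa, this, tsum_zero]

lemma contFa : ContinuousOn (Fa a) (Ici a) := by
  apply continuousOn_const.add
  exact Real.continuousOn_log.mono fun x hx => by
    simp only [mem_compl_iff, mem_singleton_iff]
    exact ne_of_gt (lt_of_lt_of_le (ha0 ha) hx)

lemma contIter (k : ℕ) : ContinuousOn ((Fa a)^[k]) (Ici a) := by
  induction k with
  | zero => simpa using continuousOn_id
  | succ n ih =>
    rw [Function.iterate_succ']
    exact (contFa ha).comp ih fun x hx => Fa_iter_ge ha n hx

lemma contSa (M : ℝ) : ContinuousOn (Sa a) (Icc a M) := by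
  apply continuousOn_tsum (u := fun k : ℕ => ((M - a) * a⁻¹) * a⁻¹ ^ k)
  · intro k
    exact ((contIter ha (k + 1)).mono Icc_subset_Ici_self).sub continuousOn_const
  · exact (summable_geometric_of_lt_one (by positivity)
      (inv_lt_one_of_one_lt₀ ha)).mul_left _
  · intro k x hx
    rw [Real.norm_of_nonneg (sub_nonneg.2 (Fa_iter_ge ha (k + 1) hx.1))]
    have h := Fa_iter_sub_le ha (k + 1) hx.1
    have h2 : (x - a) / a ^ (k + 1) ≤ (M - a) / a ^ (k + 1) :=
      div_le_div_of_nonneg_right (by linarith [hx.2]) (by positivity)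
    have h3 : (M - a) / a ^ (k + 1) = ((M - a) * a⁻¹) * a⁻¹ ^ k := by
      rw [div_eq_mul_inv, ← inv_pow, pow_succ]; ring
    linarith [h3 ▸ h2.trans_eq h3 |>.trans_eq rfl, h.trans h2, h3]


lemma hasDeriv_iter (k : ℕ) {t : ℝ} (ht : a ≤ t) :
    HasDerivAt ((Fa a)^[k]) ((∏ j ∈ Finset.range k, (Fa a)^[j] t)⁻¹) t := by
  induction k with
  | zero => simpa using hasDerivAt_id t
  | succ n ih =>
    have hw : 0 < (Fa a)^[n] t := Fa_iter_pos ha n ht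
    have hF : HasDerivAt (Fa a) (((Fa a)^[n] t)⁻¹) ((Fa a)^[n] t) := by
      exact ((Real.hasDerivAt_log hw.ne').const_add (a - Real.log a))
    have h := hF.comp t ih
    rw [Finset.prod_range_succ, mul_inv_rev, Function.iterate_succ']
    exact h

lemma prodFa_pos (k : ℕ) {t : ℝ} (ht : a ≤ t) :
    0 < ∏ j ∈ Finset.range (k + 1), (Fa a)^[j] t :=
  Finset.prod_pos fun j _ => Fa_iter_pos ha j ht

lemma cont_g (k : ℕ) :
    ContinuousOn (fun t => (∏ j ∈ Finset.range (k + 1), (Fa a)^[j] t)⁻¹) (Ici a) := by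
  apply ContinuousOn.inv₀
  · exact continuousOn_finset_prod _ fun j _ => contIter ha j
  · exact fun x hx => (prodFa_pos ha k hx).ne'

lemma integral_g {u : ℝ} (hu : a ≤ u) (k : ℕ) :
    (∫ t in a..u, (∏ j ∈ Finset.range (k + 1), (Fa a)^[j] t)⁻¹) =
      (Fa a)^[k + 1] u - a := by
  have hI : uIcc a u = Icc a u := uIcc_of_le hu
  have h := intervalIntegral.integral_eq_sub_of_hasDerivAt
    (f := (Fa a)^[k + 1])
    (f' := fun t => (∏ j ∈ Finset.range (k + 1), (Fa a)^[j] t)⁻¹)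
    (fun t ht => hasDeriv_iter ha (k + 1) (hI ▸ ht).1)
    (((cont_g ha k).mono (by rw [hI]; exact Icc_subset_Ici_self)).intervalIntegrable)
  rw [h, Fa_iter_fixed]

lemma integral_tsum_g {u : ℝ} (hu : a ≤ u) :
    (∫ t in a..u, ∑' k : ℕ, (∏ j ∈ Finset.range (k + 1), (Fa a)^[j] t)⁻¹) = Sa a u := by
  set g : ℕ → ℝ → ℝ := fun k t => (∏ j ∈ Finset.range (k + 1), (Fa a)^[j] t)⁻¹ with hg
  have hint : ∀ k, IntegrableOn (g k) (Ioc a u) volume := fun k =>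
    (((cont_g ha k).mono (Icc_subset_Ici_self : Icc a u ⊆ Ici a)).integrableOn_Icc).mono_set
      Ioc_subset_Icc_self
  have hIoceq : ∀ k : ℕ, (∫ t in Ioc a u, ‖g k t‖) = (Fa a)^[k + 1] u - a := by
    intro k
    have h1 : (∫ t in Ioc a u, ‖g k t‖) = ∫ t in Ioc a u, g k t := by
      apply setIntegral_congr_fun measurableSet_Ioc
      intro t ht
      exact Real.norm_of_nonneg (inv_nonneg.2 (prodFa_pos ha k ht.1.le).le)
    rw [h1, ← intervalIntegral.integral_of_le hu]
    exact integral_g ha hu k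
  have hsum : Summable fun k : ℕ => ∫ t in Ioc a u, ‖g k t‖ := by
    simp only [hIoceq]
    exact summable_Sterm ha hu
  have hswap := MeasureTheory.integral_tsum_of_summable_integral_norm hint hsum
  rw [intervalIntegral.integral_of_le hu, ← hswap, Sa]
  congr 1
  funext k
  rw [← intervalIntegral.integral_of_le hu]
  exact integral_g ha hu k

end Aux


/-- For each `u ≥ a` the infinite product `∏_{k=0}^∞ (F^k(u)/a)` converges to a positive
real, so `F̃` is well defined; `F̃(a) = a`; `F̃` is strictly increasing and continuous on
`[a,∞)` with `F̃(u) → ∞` as `u → ∞`; and `F̃(u) = exp(V(u))` where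
`V(u) = log a + ∫_a^u (∑_{k=0}^∞ 1/∏_{j=0}^k F^j(t)) dt`. -/
theorem stmt2 (a : ℝ) (ha : 1 < a) :
    (∀ u : ℝ, a ≤ u → Multipliable (fun k : ℕ => (Fa a)^[k] u / a) ∧
      0 < ∏' k : ℕ, ((Fa a)^[k] u / a)) ∧
    Ftilde a a = a ∧
    StrictMonoOn (Ftilde a) (Set.Ici a) ∧
    ContinuousOn (Ftilde a) (Set.Ici a) ∧
    Filter.Tendsto (Ftilde a) Filter.atTop Filter.atTop ∧
    (∀ u : ℝ, a ≤ u → Ftilde a u =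
      Real.exp (Real.log a +
        ∫ t in a..u, ∑' k : ℕ, 1 / ∏ j ∈ Finset.range (k + 1), (Fa a)^[j] t)) := by
  have ha0' : (0:ℝ) < a := ha0 ha
  have hle : ∀ u, a ≤ u → u ≤ Ftilde a u := by
    intro u hu
    have hu0 : 0 < u := lt_of_lt_of_le ha0' hu
    rw [Ftilde_eq ha hu]
    have h0 : (Fa a)^[0 + 1] u - a ≤ Sa a u :=
      Summable.le_tsum (summable_Sterm ha hu) 0
        (fun k _ => sub_nonneg.2 (Fa_iter_ge ha (k + 1) hu))
    have h1 : (Fa a)^[0 + 1] u - a = Real.log u - Real.log a := by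
      simp only [zero_add, Function.iterate_one, Fa]; ring
    have h2 : Real.log (u / a) ≤ Sa a u := by
      rw [Real.log_div hu0.ne' ha0'.ne']; linarith
    calc u = a * (u / a) := by field_simp
      _ ≤ a * Real.exp (Sa a u) := by
          apply mul_le_mul_of_nonneg_left ?_ ha0'.le
          calc u / a = Real.exp (Real.log (u / a)) :=
                (Real.exp_log (by positivity)).symm
            _ ≤ Real.exp (Sa a u) := Real.exp_le_exp.2 h2
  refine ⟨?_, ?_, ?_, ?_, ?_, ?_⟩
  · intro u hu
    refine ⟨(hasProd_Ftilde ha hu).multipliable, ?_⟩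
    rw [(hasProd_Ftilde ha hu).tprod_eq]
    exact Real.exp_pos _
  · rw [Ftilde_eq ha le_rfl, Sa_self, Real.exp_zero, mul_one]
  · intro u hu v hv huv
    rw [Ftilde_eq ha hu, Ftilde_eq ha hv]
    have hS : Sa a u < Sa a v := by
      apply Summable.tsum_lt_tsum_of_nonneg (i := 0)
      · exact fun k => sub_nonneg.2 (Fa_iter_ge ha (k + 1) hu)
      · exact fun k => sub_le_sub_right (Fa_iter_mono ha (k + 1) hu huv.le) a
      · have hlog : Real.log u < Real.log v :=
          Real.log_lt_log (lt_of_lt_of_le ha0' hu) huv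
        simp only [zero_add, Function.iterate_one, Fa]
        linarith
      · exact summable_Sterm ha hv
    exact mul_lt_mul_of_pos_left (Real.exp_lt_exp.2 hS) ha0'
  · intro x hx
    have hc : ContinuousOn (fun u => a * Real.exp (Sa a u)) (Icc a (x + 1)) :=
      continuousOn_const.mul (Real.continuous_exp.comp_continuousOn (contSa ha (x + 1)))
    have hmem : Icc a (x + 1) ∈ 𝓝[Ici a] x := by
      have h1 : Iic (x + 1) ∈ 𝓝[Ici a] x :=
        mem_nhdsWithin_of_mem_nhds (Iic_mem_nhds (lt_add_one x))
      have h2 := Filter.inter_mem self_mem_nhdsWithin h1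
      rwa [Ici_inter_Iic] at h2
    have hx1 : x ∈ Icc a (x + 1) := ⟨hx, by linarith⟩
    have h2 : ContinuousWithinAt (fun u => a * Real.exp (Sa a u)) (Ici a) x :=
      (hc.continuousWithinAt hx1).mono_of_mem_nhdsWithin hmem
    exact h2.congr (fun y hy => Ftilde_eq ha hy) (Ftilde_eq ha hx)
  · refine tendsto_atTop_mono' atTop ?_ tendsto_id
    filter_upwards [eventually_ge_atTop a] with u hu using hle u hu
  · intro u hu
    have hint : (∫ t in a..u, ∑' k : ℕ,
        1 / ∏ j ∈ Finset.range (k + 1), (Fa a)^[j] t) = Sa a u := by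
      simp_rw [one_div]
      exact integral_tsum_g ha hu
    rw [Ftilde_eq ha hu, hint, Real.exp_add, Real.exp_log ha0']
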